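/- Let k ∈ ℕ, r_1, …, r_k ≥ 0, and let (β_m)_{m∈ℕ} be i.i.d. standard normal random variables. Then (1/M) Var( Σ_{m=1}^{M−k+1} Π_{j=1}^{k} |β_{m+j−1}|^{r_j} ) → A(r_1, …, r_k) as M → ∞, where A(r_1, …, r_k) = Π_{l=1}^{k} μ_{2r_l} − (2k − 1) Π_{l=1}^{k} μ_{r_l}² + 2 Σ_{j=1}^{k−1} ( Π_{l=1}^{j} μ_{r_l} · Π_{l=k−j+1}^{k} μ_{r_l} · Π_{l=1}^{k−j} μ_{r_l + r_{l+j}} ). -/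

import Mathlib

open MeasureTheory ProbabilityTheory Filter

/-- `μ_r = E|Z|^r` for a standard normal `Z`. -/
noncomputable def stdAbsMoment (r : ℝ) : ℝ := ∫ x, |x| ^ r ∂(gaussianReal 0 1)

/-- The constant `A(r_1, …, r_k)` from Podolskij–Vetter (2009), with the powers
indexed as `r 0, …, r (k-1)` (so `r_j` of the paper is `r (j-1)` here):
`A = ∏ μ_{2r_l} - (2k-1) ∏ μ_{r_l}² +
  2 ∑_{j=1}^{k-1} (∏_{l=1}^{j} μ_{r_l}) (∏_{l=k-j+1}^{k} μ_{r_l}) (∏_{l=1}^{k-j} μ_{r_l + r_{l+j}})`. -/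
noncomputable def Aconst (k : ℕ) (r : ℕ → ℝ) : ℝ :=
  (∏ l ∈ Finset.range k, stdAbsMoment (2 * r l))
    - (2 * k - 1) * ∏ l ∈ Finset.range k, (stdAbsMoment (r l)) ^ 2
    + 2 * ∑ j ∈ Finset.Icc 1 (k - 1),
        (∏ l ∈ Finset.range j, stdAbsMoment (r l)) *
        (∏ l ∈ Finset.Ico (k - j) k, stdAbsMoment (r l)) *
        (∏ l ∈ Finset.range (k - j), stdAbsMoment (r l + r (l + j)))

set_option linter.unusedSectionVars false

section AuxReal
open Real Set

lemma abs_rpow_add' (x : ℝ) {a b : ℝ} (ha : 0 ≤ a) (hb : 0 ≤ b) :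
    |x| ^ (a + b) = |x| ^ a * |x| ^ b := by
  rcases eq_or_ne x 0 with rfl | hx
  · rcases eq_or_ne a 0 with rfl | ha'
    · simp
    rcases eq_or_ne b 0 with rfl | hb'
    · simp
    rw [abs_zero, Real.zero_rpow ha', Real.zero_rpow hb',
      Real.zero_rpow (by positivity), mul_zero]
  · exact Real.rpow_add (abs_pos.2 hx) a b

lemma integrable_abs_rpow_mul_exp {b : ℝ} (hb : 0 < b) {t : ℝ} (ht : 0 ≤ t) :
    Integrable (fun x : ℝ => |x| ^ t * Real.exp (-b * x ^ 2)) := by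
  have hmeas : Measurable (fun x : ℝ => |x| ^ t * Real.exp (-b * x ^ 2)) :=
    (measurable_abs.pow_const t).mul
      (((measurable_id.pow_const 2).const_mul (-b)).exp)
  have h1 : IntegrableOn (fun x : ℝ => |x| ^ t * Real.exp (-b * x ^ 2)) (Ioi 0) := by
    refine (integrableOn_rpow_mul_exp_neg_mul_sq hb (by linarith : (-1:ℝ) < t)).congr_fun
      (fun x hx => ?_) measurableSet_Ioi
    rw [abs_of_pos hx]
  have h2 : IntegrableOn (fun x : ℝ => |x| ^ t * Real.exp (-b * x ^ 2)) (Iic 0) := by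
    rw [← (Measure.measurePreserving_neg (volume : Measure ℝ)).integrableOn_comp_preimage
        (Homeomorph.neg ℝ).measurableEmbedding]
    simp only [Function.comp_def, neg_sq, abs_neg, neg_preimage, neg_Iic, neg_zero]
    rw [integrableOn_Ici_iff_integrableOn_Ioi]
    exact h1
  rw [← integrableOn_univ, ← Set.Iic_union_Ioi (a := (0:ℝ)), integrableOn_union]
  exact ⟨h2, h1⟩

lemma integrable_abs_rpow_gaussian {t : ℝ} (ht : 0 ≤ t) :
    Integrable (fun x : ℝ => |x| ^ t) (gaussianReal 0 1) := by
  rw [gaussianReal_of_var_ne_zero 0 one_ne_zero]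
  rw [integrable_withDensity_iff (measurable_gaussianPDF 0 1)
    (Filter.Eventually.of_forall fun x => ENNReal.ofReal_lt_top)]
  have : ∀ x : ℝ, (gaussianPDF 0 1 x).toReal
      = (Real.sqrt (2 * Real.pi))⁻¹ * Real.exp (-(2:ℝ)⁻¹ * x ^ 2) := by
    intro x
    rw [gaussianPDF_def, ENNReal.toReal_ofReal (gaussianPDFReal_nonneg 0 1 x),
      gaussianPDFReal_def]
    push_cast
    norm_num
    left
    ring_nf
  simp only [this]
  have := (integrable_abs_rpow_mul_exp (b := (2:ℝ)⁻¹) (by norm_num) ht).const_mul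
    (Real.sqrt (2 * Real.pi))⁻¹
  refine this.congr ?_
  filter_upwards with x
  ring

lemma stdAbsMoment_zero : stdAbsMoment 0 = 1 := by
  simp [stdAbsMoment]

end AuxReal

section Comb
open Finset

lemma sum_dist_step (h : ℕ → ℝ) (k : ℕ) (hk : 1 ≤ k) (hzero : ∀ d, k ≤ d → h d = 0)
    (N : ℕ) (hN : k ≤ N) :
    (∑ m ∈ Icc 1 (N + 1), ∑ n ∈ Icc 1 (N + 1), h (max m n - min m n))
      = (∑ m ∈ Icc 1 N, ∑ n ∈ Icc 1 N, h (max m n - min m n))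
        + (h 0 + 2 * ∑ d ∈ Icc 1 (k - 1), h d) := by
  have hins : Icc 1 (N + 1) = insert (N + 1) (Icc 1 N) := by
    ext x; simp only [mem_Icc, mem_insert]; omega
  have hnm : (N + 1) ∉ Icc 1 N := by simp
  have hrefl : ∀ n ∈ Icc 1 N, h (max (N + 1) n - min (N + 1) n) = h (N + 1 - n) := by
    intro n hn
    rw [mem_Icc] at hn
    rw [max_eq_left (by omega), min_eq_right (by omega)]
  have hrefl' : ∀ m ∈ Icc 1 N, h (max m (N + 1) - min m (N + 1)) = h (N + 1 - m) := by
    intro m hm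
    rw [mem_Icc] at hm
    rw [max_eq_right (by omega), min_eq_left (by omega)]
  have hflip : ∑ n ∈ Icc 1 N, h (N + 1 - n) = ∑ d ∈ Icc 1 N, h d := by
    refine Finset.sum_nbij' (fun n => N + 1 - n) (fun d => N + 1 - d) ?_ ?_ ?_ ?_ ?_
    · intro a ha; simp only [mem_Icc] at ha ⊢; omega
    · intro a ha; simp only [mem_Icc] at ha ⊢; omega
    · intro a ha; simp only [mem_Icc] at ha; omega
    · intro a ha; simp only [mem_Icc] at ha; omega
    · intro a ha; rfl
  have htrunc : ∑ d ∈ Icc 1 N, h d = ∑ d ∈ Icc 1 (k - 1), h d := by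
    refine (Finset.sum_subset (Icc_subset_Icc_right (by omega)) ?_).symm
    intro x hx hnx
    rw [mem_Icc] at hx
    rw [mem_Icc] at hnx
    exact hzero x (by omega)
  simp only [hins, Finset.sum_insert hnm, Finset.sum_add_distrib]
  rw [Finset.sum_congr rfl hrefl, Finset.sum_congr rfl hrefl', hflip, htrunc]
  simp only [Nat.max_self, Nat.min_self, Nat.sub_self]
  ring

lemma sum_dist_formula (h : ℕ → ℝ) (k : ℕ) (hk : 1 ≤ k) (hzero : ∀ d, k ≤ d → h d = 0)
    (N : ℕ) (hN : k ≤ N) :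
    (∑ m ∈ Icc 1 N, ∑ n ∈ Icc 1 N, h (max m n - min m n))
      = (∑ m ∈ Icc 1 k, ∑ n ∈ Icc 1 k, h (max m n - min m n))
        + ((N : ℝ) - k) * (h 0 + 2 * ∑ d ∈ Icc 1 (k - 1), h d) := by
  obtain ⟨j, rfl⟩ : ∃ j, N = k + j := ⟨N - k, by omega⟩
  induction j with
  | zero => simp
  | succ j ih =>
    rw [show k + (j + 1) = (k + j) + 1 by omega,
      sum_dist_step h k hk hzero (k + j) (by omega), ih (by omega)]
    push_cast
    ring

end Comb


noncomputable def ee (k d : ℕ) (r : ℕ → ℝ) (j : ℕ) : ℝ :=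
  (if j < k then r j else 0) + (if d ≤ j then r (j - d) else 0)

noncomputable def E2 (k : ℕ) (r : ℕ → ℝ) (d : ℕ) : ℝ :=
  ∏ j ∈ Finset.range (k + d), stdAbsMoment (ee k d r j)

lemma E2_zero (k : ℕ) (r : ℕ → ℝ) :
    E2 k r 0 = ∏ l ∈ Finset.range k, stdAbsMoment (2 * r l) := by
  rw [E2, Nat.add_zero]
  refine Finset.prod_congr rfl fun j hj => ?_
  rw [Finset.mem_range] at hj
  have : ee k 0 r j = 2 * r j := by
    simp only [ee, if_pos hj, Nat.sub_zero, Nat.zero_le, if_pos]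
    ring
  rw [this]

lemma E2_large (k : ℕ) (r : ℕ → ℝ) (d : ℕ) (hd : k ≤ d) :
    E2 k r d = (∏ l ∈ Finset.range k, stdAbsMoment (r l)) *
      ∏ l ∈ Finset.range k, stdAbsMoment (r l) := by
  rw [E2]
  have h1 : k + d = d + k := by omega
  rw [h1, Finset.prod_range_add]
  have h2 : d = k + (d - k) := by omega
  rw [h2, Finset.prod_range_add, ← h2]
  have f1 : ∀ j ∈ Finset.range k, stdAbsMoment (ee k d r j) = stdAbsMoment (r j) := by
    intro j hj
    rw [Finset.mem_range] at hj
    have : ee k d r j = r j := by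
      simp only [ee, if_pos hj, if_neg (show ¬ d ≤ j by omega), add_zero]
    rw [this]
  have f2 : ∀ i ∈ Finset.range (d - k), stdAbsMoment (ee k d r (k + i)) = 1 := by
    intro i hi
    rw [Finset.mem_range] at hi
    have : ee k d r (k + i) = 0 := by
      simp only [ee, if_neg (show ¬ k + i < k by omega),
        if_neg (show ¬ d ≤ k + i by omega), add_zero]
    rw [this, stdAbsMoment_zero]
  have f3 : ∀ i ∈ Finset.range k, stdAbsMoment (ee k d r (d + i)) = stdAbsMoment (r i) := by
    intro i hi
    rw [Finset.mem_range] at hi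
    have : ee k d r (d + i) = r i := by
      simp only [ee, if_neg (show ¬ d + i < k by omega),
        if_pos (show d ≤ d + i by omega), Nat.add_sub_cancel_left, zero_add]
    rw [this]
  rw [Finset.prod_congr rfl f1, Finset.prod_congr rfl f2, Finset.prod_congr rfl f3,
    Finset.prod_const_one, mul_one]

lemma E2_mid (k : ℕ) (r : ℕ → ℝ) (d : ℕ) (hd1 : 1 ≤ d) (hdk : d < k) :
    E2 k r d = (∏ l ∈ Finset.range d, stdAbsMoment (r l)) *
      (∏ l ∈ Finset.Ico (k - d) k, stdAbsMoment (r l)) *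
      (∏ l ∈ Finset.range (k - d), stdAbsMoment (r l + r (l + d))) := by
  rw [E2]
  have h1 : k + d = d + ((k - d) + d) := by omega
  rw [h1, Finset.prod_range_add, Finset.prod_range_add]
  have f1 : ∀ j ∈ Finset.range d, stdAbsMoment (ee k d r j) = stdAbsMoment (r j) := by
    intro j hj
    rw [Finset.mem_range] at hj
    have : ee k d r j = r j := by
      simp only [ee, if_pos (show j < k by omega), if_neg (show ¬ d ≤ j by omega), add_zero]
    rw [this]
  have f2 : ∀ i ∈ Finset.range (k - d),
      stdAbsMoment (ee k d r (d + i)) = stdAbsMoment (r i + r (i + d)) := by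
    intro i hi
    rw [Finset.mem_range] at hi
    have : ee k d r (d + i) = r i + r (i + d) := by
      simp only [ee, if_pos (show d + i < k by omega),
        if_pos (show d ≤ d + i by omega), Nat.add_sub_cancel_left]
      rw [Nat.add_comm d i, add_comm]
    rw [this]
  have f3 : ∀ i ∈ Finset.range d,
      stdAbsMoment (ee k d r (d + ((k - d) + i))) = stdAbsMoment (r (k - d + i)) := by
    intro i hi
    rw [Finset.mem_range] at hi
    have harith : d + ((k - d) + i) = k + i := by omega
    rw [harith]
    have : ee k d r (k + i) = r (k + i - d) := by
      simp only [ee, if_neg (show ¬ k + i < k by omega),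
        if_pos (show d ≤ k + i by omega), zero_add]
    rw [this]
    congr 2
    omega
  rw [Finset.prod_congr rfl f1, Finset.prod_congr rfl f2, Finset.prod_congr rfl f3]
  have : ∏ l ∈ Finset.Ico (k - d) k, stdAbsMoment (r l)
      = ∏ i ∈ Finset.range d, stdAbsMoment (r (k - d + i)) := by
    rw [Finset.prod_Ico_eq_prod_range]
    have h9 : k - (k - d) = d := by omega
    rw [h9]
  rw [this]
  ring

lemma Aconst_eq (k : ℕ) (hk : 1 ≤ k) (r : ℕ → ℝ) :
    Aconst k r = (E2 k r 0 - (∏ l ∈ Finset.range k, stdAbsMoment (r l)) ^ 2)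
      + 2 * ∑ d ∈ Finset.Icc 1 (k - 1),
          (E2 k r d - (∏ l ∈ Finset.range k, stdAbsMoment (r l)) ^ 2) := by
  have hmid : ∀ d ∈ Finset.Icc 1 (k - 1), E2 k r d
      = (∏ l ∈ Finset.range d, stdAbsMoment (r l)) *
        (∏ l ∈ Finset.Ico (k - d) k, stdAbsMoment (r l)) *
        (∏ l ∈ Finset.range (k - d), stdAbsMoment (r l + r (l + d))) := by
    intro d hd
    rw [Finset.mem_Icc] at hd
    exact E2_mid k r d hd.1 (by omega)
  have hsum : ∑ d ∈ Finset.Icc 1 (k - 1),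
        (E2 k r d - (∏ l ∈ Finset.range k, stdAbsMoment (r l)) ^ 2)
      = ∑ d ∈ Finset.Icc 1 (k - 1),
        ((∏ l ∈ Finset.range d, stdAbsMoment (r l)) *
        (∏ l ∈ Finset.Ico (k - d) k, stdAbsMoment (r l)) *
        (∏ l ∈ Finset.range (k - d), stdAbsMoment (r l + r (l + d)))
          - (∏ l ∈ Finset.range k, stdAbsMoment (r l)) ^ 2) :=
    Finset.sum_congr rfl fun d hd => by rw [hmid d hd]
  rw [Aconst, E2_zero, hsum, Finset.sum_sub_distrib, Finset.sum_const,
    Nat.card_Icc, nsmul_eq_mul]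
  have hcard : ((k - 1 + 1 - 1 : ℕ) : ℝ) = (k : ℝ) - 1 := by
    have h9 : k - 1 + 1 - 1 = k - 1 := by omega
    rw [h9]
    push_cast [hk]
    ring
  rw [hcard, ← Finset.prod_pow]
  push_cast
  ring

noncomputable def XX {Ω : Type*} (β : ℕ → Ω → ℝ) (k : ℕ) (r : ℕ → ℝ) (m : ℕ) : Ω → ℝ :=
  fun ω => ∏ j ∈ Finset.range k, |β (m + j) ω| ^ r j

section Prob
open Real Set

variable {Ω : Type*} [MeasureSpace Ω] [IsProbabilityMeasure (ℙ : Measure Ω)]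
    (β : ℕ → Ω → ℝ) (hβmeas : ∀ m, Measurable (β m))
    (hβindep : iIndepFun β ℙ)
    (hβgauss : ∀ m, Measure.map (β m) ℙ = gaussianReal 0 1)

variable {k : ℕ} {r : ℕ → ℝ}

include hβmeas hβgauss in
lemma single_integrable (i : ℕ) {t : ℝ} (ht : 0 ≤ t) :
    Integrable (fun ω => |β i ω| ^ t) ℙ := by
  have h := (integrable_map_measure
    (μ := (ℙ : Measure Ω)) (f := β i) (g := fun x : ℝ => |x| ^ t)
    ?_ (hβmeas i).aemeasurable).mp ?_
  · exact h
  · rw [hβgauss i]; exact (integrable_abs_rpow_gaussian ht).aestronglyMeasurable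
  · rw [hβgauss i]; exact integrable_abs_rpow_gaussian ht

include hβmeas hβgauss in
lemma single_integral (i : ℕ) {t : ℝ} (ht : 0 ≤ t) :
    ∫ ω, |β i ω| ^ t ∂ℙ = stdAbsMoment t := by
  have : ∫ ω, |β i ω| ^ t ∂ℙ = ∫ x, |x| ^ t ∂(Measure.map (β i) ℙ) := by
    rw [integral_map (hβmeas i).aemeasurable]
    rw [hβgauss i]
    exact (integrable_abs_rpow_gaussian ht).aestronglyMeasurable
  rw [this, hβgauss i, stdAbsMoment]

include hβmeas hβindep hβgauss in
lemma prod_key (s : Finset ℕ) (e : ℕ → ℝ) (he : ∀ i ∈ s, 0 ≤ e i) :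
    Integrable (fun ω => ∏ i ∈ s, |β i ω| ^ e i) ℙ ∧
      ∫ ω, ∏ i ∈ s, |β i ω| ^ e i ∂ℙ = ∏ i ∈ s, stdAbsMoment (e i) := by
  classical
  induction s using Finset.induction_on with
  | empty => simp
  | @insert a s ha ih =>
    have he' : ∀ i ∈ s, 0 ≤ e i := fun i hi => he i (Finset.mem_insert_of_mem hi)
    have hea : 0 ≤ e a := he a (Finset.mem_insert_self a s)
    obtain ⟨ihInt, ihVal⟩ := ih he'
    set Y : ℕ → Ω → ℝ := fun i ω => |β i ω| ^ e i with hY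
    have hYmeas : ∀ i, Measurable (Y i) := fun i =>
      (hβmeas i).abs.pow_const (e i)
    have hYindep : iIndepFun Y ℙ := by
      have := hβindep.comp (fun i (x : ℝ) => |x| ^ e i)
        (fun i => measurable_abs.pow_const (e i))
      exact this
    have hind : IndepFun (Y a) (fun ω => ∏ i ∈ s, Y i ω) ℙ := by
      have h2 := hYindep.indepFun_finsetProd_of_notMem hYmeas ha
      have : (∏ j ∈ s, Y j) = fun ω => ∏ i ∈ s, Y i ω := by
        funext ω; simp [Finset.prod_apply]
      rw [this] at h2
      exact h2.symm
    have hInta : Integrable (Y a) ℙ := single_integrable β hβmeas hβgauss a hea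
    constructor
    · have := hind.integrable_mul hInta ihInt
      refine this.congr ?_
      filter_upwards with ω
      simp [Finset.prod_insert ha, Y]
    · have hmul := hind.integral_mul_eq_mul_integral hInta.aestronglyMeasurable ihInt.aestronglyMeasurable
      have : (fun ω => ∏ i ∈ insert a s, |β i ω| ^ e i)
          = fun ω => Y a ω * ∏ i ∈ s, Y i ω := by
        funext ω; simp [Finset.prod_insert ha, Y]
      rw [this]
      calc ∫ ω, Y a ω * ∏ i ∈ s, Y i ω ∂ℙ
          = ∫ ω, (Y a * fun ω => ∏ i ∈ s, Y i ω) ω ∂ℙ := rfl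
        _ = (∫ ω, Y a ω ∂ℙ) * ∫ ω, ∏ i ∈ s, Y i ω ∂ℙ := hmul
        _ = ∏ i ∈ insert a s, stdAbsMoment (e i) := by
            rw [ihVal, Finset.prod_insert ha,
              single_integral β hβmeas hβgauss a hea]

lemma XX_eq (m : ℕ) :
    XX β k r m = fun ω => ∏ i ∈ Finset.Ico m (m + k), |β i ω| ^ r (i - m) := by
  funext ω
  rw [Finset.prod_Ico_eq_prod_range]
  simp [XX]

include hβmeas hβindep hβgauss in
lemma EX (hr : ∀ j, j < k → 0 ≤ r j) (m : ℕ) :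
    Integrable (XX β k r m) ℙ ∧
      ∫ ω, XX β k r m ω ∂ℙ = ∏ l ∈ Finset.range k, stdAbsMoment (r l) := by
  have he : ∀ i ∈ Finset.Ico m (m + k), 0 ≤ r (i - m) := by
    intro i hi
    rw [Finset.mem_Ico] at hi
    exact hr _ (by omega)
  obtain ⟨h1, h2⟩ := prod_key β hβmeas hβindep hβgauss _ _ he
  rw [XX_eq]
  refine ⟨h1, ?_⟩
  rw [h2, Finset.prod_Ico_eq_prod_range]
  simp

include hβmeas hβindep hβgauss in
lemma EXX (hr : ∀ j, j < k → 0 ≤ r j) (m d : ℕ) :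
    Integrable (fun ω => XX β k r m ω * XX β k r (m + d) ω) ℙ ∧
      ∫ ω, XX β k r m ω * XX β k r (m + d) ω ∂ℙ = E2 k r d := by
  classical
  set s : Finset ℕ := Finset.Ico m (m + k + d) with hs
  set e1 : ℕ → ℝ := fun j => if j < k then r j else 0 with he1def
  set e2 : ℕ → ℝ := fun j => if d ≤ j then r (j - d) else 0 with he2def
  have he1 : ∀ j, 0 ≤ e1 j := by
    intro j; simp only [e1]; split_ifs with h; exacts [hr _ h, le_rfl]
  have he2 : ∀ j, j < k + d → 0 ≤ e2 j := by
    intro j hj; simp only [e2]; split_ifs with h; exacts [hr _ (by omega), le_rfl]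
  have heeq : ∀ j, ee k d r j = e1 j + e2 j := fun j => rfl
  have he : ∀ i ∈ s, 0 ≤ ee k d r (i - m) := by
    intro i hi
    rw [hs, Finset.mem_Ico] at hi
    rw [heeq]
    exact add_nonneg (he1 _) (he2 _ (by omega))
  obtain ⟨h1, h2⟩ := prod_key β hβmeas hβindep hβgauss s (fun i => ee k d r (i - m)) he
  have heq : (fun ω => ∏ i ∈ s, |β i ω| ^ ee k d r (i - m))
      = fun ω => XX β k r m ω * XX β k r (m + d) ω := by
    funext ω
    have step1 : ∏ i ∈ s, |β i ω| ^ ee k d r (i - m)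
        = ∏ i ∈ s, (|β i ω| ^ e1 (i - m) * |β i ω| ^ e2 (i - m)) := by
      refine Finset.prod_congr rfl fun i hi => ?_
      rw [hs, Finset.mem_Ico] at hi
      rw [heeq]
      exact abs_rpow_add' _ (he1 _) (he2 _ (by omega))
    have f1 : ∏ i ∈ s, |β i ω| ^ e1 (i - m) = XX β k r m ω := by
      have hsub : Finset.Ico m (m + k) ⊆ s :=
        Finset.Ico_subset_Ico le_rfl (by omega)
      have hout : ∀ i ∈ s, i ∉ Finset.Ico m (m + k) → |β i ω| ^ e1 (i - m) = 1 := by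
        intro i hi hni
        rw [hs, Finset.mem_Ico] at hi
        rw [Finset.mem_Ico] at hni
        have : ¬ (i - m < k) := by omega
        simp only [e1, if_neg this, Real.rpow_zero]
      rw [← Finset.prod_subset hsub hout, XX_eq]
      refine Finset.prod_congr rfl fun i hi => ?_
      rw [Finset.mem_Ico] at hi
      simp only [e1, if_pos (show i - m < k by omega)]
    have f2 : ∏ i ∈ s, |β i ω| ^ e2 (i - m) = XX β k r (m + d) ω := by
      have hsub : Finset.Ico (m + d) (m + k + d) ⊆ s :=
        Finset.Ico_subset_Ico (by omega) le_rfl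
      have hout : ∀ i ∈ s, i ∉ Finset.Ico (m + d) (m + k + d) →
          |β i ω| ^ e2 (i - m) = 1 := by
        intro i hi hni
        rw [hs, Finset.mem_Ico] at hi
        rw [Finset.mem_Ico] at hni
        have : ¬ (d ≤ i - m) := by omega
        simp only [e2, if_neg this, Real.rpow_zero]
      rw [← Finset.prod_subset hsub hout, XX_eq]
      have harith : m + d + k = m + k + d := by omega
      rw [harith]
      refine Finset.prod_congr rfl fun i hi => ?_
      rw [Finset.mem_Ico] at hi
      have h3 : d ≤ i - m := by omega
      have h4 : i - m - d = i - (m + d) := by omega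
      simp only [e2, if_pos h3, h4]
    rw [step1, Finset.prod_mul_distrib, f1, f2]
  rw [heq] at h1 h2
  refine ⟨h1, ?_⟩
  rw [h2, hs, Finset.prod_Ico_eq_prod_range]
  have harith : m + k + d - m = k + d := by omega
  rw [harith, E2]
  refine Finset.prod_congr rfl fun j hj => ?_
  have : m + j - m = j := by omega
  rw [this]

include hβmeas hβindep hβgauss

lemma EXX' (hr : ∀ j, j < k → 0 ≤ r j) (m n : ℕ) :
    Integrable (fun ω => XX β k r m ω * XX β k r n ω) ℙ ∧
      ∫ ω, XX β k r m ω * XX β k r n ω ∂ℙ = E2 k r (max m n - min m n) := by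
  rcases le_total m n with h | h
  · have h2 := EXX β hβmeas hβindep hβgauss hr m (n - m)
    rw [show m + (n - m) = n by omega] at h2
    rw [max_eq_right h, min_eq_left h]
    exact h2
  · have h2 := EXX β hβmeas hβindep hβgauss hr n (m - n)
    rw [show n + (m - n) = m by omega] at h2
    rw [max_eq_left h, min_eq_right h]
    have hc : (fun ω => XX β k r m ω * XX β k r n ω)
        = fun ω => XX β k r n ω * XX β k r m ω := by
      funext ω; ring
    rw [hc]
    exact h2

lemma Xmeas (m : ℕ) : Measurable (XX β k r m) := by
  apply Finset.measurable_prod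
  intro j hj
  exact (hβmeas (m + j)).abs.pow_const (r j)

lemma var_eq (hr : ∀ j, j < k → 0 ≤ r j) (N : ℕ) :
    variance (fun ω => ∑ m ∈ Finset.Icc 1 N, XX β k r m ω) ℙ
      = ∑ m ∈ Finset.Icc 1 N, ∑ n ∈ Finset.Icc 1 N,
          (E2 k r (max m n - min m n)
            - (∏ l ∈ Finset.range k, stdAbsMoment (r l)) ^ 2) := by
  classical
  set aa : ℝ := ∏ l ∈ Finset.range k, stdAbsMoment (r l) with haa
  have hmem : ∀ m : ℕ, MemLp (XX β k r m) 2 ℙ := by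
    intro m
    refine (memLp_two_iff_integrable_sq
      (Xmeas β hβmeas hβindep hβgauss m).aestronglyMeasurable).2 ?_
    have h2 := (EXX β hβmeas hβindep hβgauss hr m 0).1
    rw [Nat.add_zero] at h2
    refine h2.congr ?_
    filter_upwards with ω
    rw [sq]
  have hfun : (∑ m ∈ Finset.Icc 1 N, XX β k r m)
      = fun ω => ∑ m ∈ Finset.Icc 1 N, XX β k r m ω := by
    funext ω; simp
  have hS : MemLp (fun ω => ∑ m ∈ Finset.Icc 1 N, XX β k r m ω) 2 ℙ := by
    rw [← hfun]
    exact memLp_finset_sum' (μ := (ℙ : Measure Ω)) (Finset.Icc 1 N) (fun m _ => hmem m)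
  rw [variance_eq_sub hS]
  have hint1 : ∫ ω, (∑ m ∈ Finset.Icc 1 N, XX β k r m ω) ∂ℙ = (N : ℝ) * aa := by
    rw [integral_finset_sum _ (fun m _ => (EX β hβmeas hβindep hβgauss hr m).1),
      Finset.sum_congr rfl (fun m _ => (EX β hβmeas hβindep hβgauss hr m).2),
      Finset.sum_const, Nat.card_Icc, nsmul_eq_mul,
      show N + 1 - 1 = N by omega]
  have hint2 : ∫ ω, (∑ m ∈ Finset.Icc 1 N, XX β k r m ω) ^ 2 ∂ℙ
      = ∑ m ∈ Finset.Icc 1 N, ∑ n ∈ Finset.Icc 1 N, E2 k r (max m n - min m n) := by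
    have hsq : ∀ ω : Ω, (∑ m ∈ Finset.Icc 1 N, XX β k r m ω) ^ 2
        = ∑ m ∈ Finset.Icc 1 N, ∑ n ∈ Finset.Icc 1 N, XX β k r m ω * XX β k r n ω := by
      intro ω; rw [sq, Finset.sum_mul_sum]
    calc ∫ ω, (∑ m ∈ Finset.Icc 1 N, XX β k r m ω) ^ 2 ∂ℙ
        = ∫ ω, ∑ m ∈ Finset.Icc 1 N, ∑ n ∈ Finset.Icc 1 N,
            XX β k r m ω * XX β k r n ω ∂ℙ := by simp only [hsq]
      _ = ∑ m ∈ Finset.Icc 1 N, ∫ ω, ∑ n ∈ Finset.Icc 1 N,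
            XX β k r m ω * XX β k r n ω ∂ℙ :=
          integral_finset_sum _ (fun m _ => integrable_finset_sum _
            (fun n _ => (EXX' β hβmeas hβindep hβgauss hr m n).1))
      _ = ∑ m ∈ Finset.Icc 1 N, ∑ n ∈ Finset.Icc 1 N,
            ∫ ω, XX β k r m ω * XX β k r n ω ∂ℙ :=
          Finset.sum_congr rfl (fun m _ => integral_finset_sum _
            (fun n _ => (EXX' β hβmeas hβindep hβgauss hr m n).1))
      _ = ∑ m ∈ Finset.Icc 1 N, ∑ n ∈ Finset.Icc 1 N, E2 k r (max m n - min m n) :=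
          Finset.sum_congr rfl (fun m _ => Finset.sum_congr rfl
            (fun n _ => (EXX' β hβmeas hβindep hβgauss hr m n).2))
  have hLHS : ℙ[(fun ω => ∑ m ∈ Finset.Icc 1 N, XX β k r m ω) ^ 2]
      = ∫ ω, (∑ m ∈ Finset.Icc 1 N, XX β k r m ω) ^ 2 ∂ℙ := by
    congr 1
  rw [hLHS, hint2]
  have hmu : ℙ[fun ω => ∑ m ∈ Finset.Icc 1 N, XX β k r m ω] = (N : ℝ) * aa := hint1
  rw [hmu]
  simp only [Finset.sum_sub_distrib, Finset.sum_const, Nat.card_Icc, nsmul_eq_mul]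
  have hN : ((N + 1 - 1 : ℕ) : ℝ) = (N : ℝ) := by
    rw [show N + 1 - 1 = N by omega]
  rw [hN]
  ring

end Prob

/-- For i.i.d. standard normal `β`, the scaled variance of the multipower sum
converges: `M⁻¹ Var(∑_{m=1}^{M-k+1} ∏_{j<k} |β_{m+j}|^{r j}) → A(r_1, …, r_k)`. -/
theorem multipower_sum_variance_tendsto
    {Ω : Type*} [MeasureSpace Ω] [IsProbabilityMeasure (ℙ : Measure Ω)]
    (k : ℕ) (hk : 1 ≤ k) (r : ℕ → ℝ) (hr : ∀ j, j < k → 0 ≤ r j)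
    (β : ℕ → Ω → ℝ) (hβmeas : ∀ m, Measurable (β m))
    (hβindep : iIndepFun β ℙ)
    (hβgauss : ∀ m, Measure.map (β m) ℙ = gaussianReal 0 1) :
    Tendsto (fun M : ℕ =>
        (M : ℝ)⁻¹ * variance (fun ω =>
          ∑ m ∈ Finset.Icc 1 (M - k + 1),
            ∏ j ∈ Finset.range k, |β (m + j) ω| ^ (r j)) ℙ)
      atTop (nhds (Aconst k r)) := by
  classical
  have hzero : ∀ d, k ≤ d → E2 k r d
      - (∏ l ∈ Finset.range k, stdAbsMoment (r l)) ^ 2 = 0 := by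
    intro d hd
    rw [E2_large k r d hd, sq, sub_self]
  set Vk : ℝ := ∑ m ∈ Finset.Icc 1 k, ∑ n ∈ Finset.Icc 1 k,
      (E2 k r (max m n - min m n)
        - (∏ l ∈ Finset.range k, stdAbsMoment (r l)) ^ 2) with hVk
  have hvar : ∀ M : ℕ, 2 * k ≤ M →
      variance (fun ω => ∑ m ∈ Finset.Icc 1 (M - k + 1),
          ∏ j ∈ Finset.range k, |β (m + j) ω| ^ (r j)) ℙ
        = Vk + ((M : ℝ) - 2 * k + 1) * Aconst k r := by
    intro M hM
    have hre : (fun ω => ∑ m ∈ Finset.Icc 1 (M - k + 1),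
        ∏ j ∈ Finset.range k, |β (m + j) ω| ^ (r j))
        = fun ω => ∑ m ∈ Finset.Icc 1 (M - k + 1), XX β k r m ω := rfl
    rw [hre, var_eq β hβmeas hβindep hβgauss hr (M - k + 1)]
    have hcomb := sum_dist_formula
      (fun d => E2 k r d - (∏ l ∈ Finset.range k, stdAbsMoment (r l)) ^ 2)
      k hk hzero (M - k + 1) (by omega)
    rw [hcomb, ← hVk]
    have hAc : Aconst k r
        = (E2 k r 0 - (∏ l ∈ Finset.range k, stdAbsMoment (r l)) ^ 2)
          + 2 * ∑ d ∈ Finset.Icc 1 (k - 1),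
              (E2 k r d - (∏ l ∈ Finset.range k, stdAbsMoment (r l)) ^ 2) :=
      Aconst_eq k hk r
    rw [← hAc]
    have hc : ((M - k + 1 : ℕ) : ℝ) = (M : ℝ) - k + 1 := by
      rw [Nat.cast_add, Nat.cast_sub (show k ≤ M by omega), Nat.cast_one]
    rw [hc]
    ring
  have h0 : Tendsto (fun M : ℕ => (M : ℝ)⁻¹) atTop (nhds 0) :=
    tendsto_inv_atTop_nhds_zero_nat
  have hlim : Tendsto (fun M : ℕ => Vk * (M : ℝ)⁻¹
      + (1 - (2 * (k : ℝ) - 1) * (M : ℝ)⁻¹) * Aconst k r) atTop (nhds (Aconst k r)) := by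
    have h2 := (h0.const_mul Vk).add
      (((tendsto_const_nhds (x := (1 : ℝ))).sub
        (h0.const_mul (2 * (k : ℝ) - 1))).mul (tendsto_const_nhds (x := Aconst k r)))
    simpa using h2
  refine hlim.congr' ?_
  filter_upwards [eventually_ge_atTop (2 * k)] with M hM
  have hM0 : (M : ℝ) ≠ 0 := Nat.cast_ne_zero.2 (by omega)
  rw [hvar M hM]
  have expand : (M : ℝ)⁻¹ * (Vk + ((M : ℝ) - 2 * k + 1) * Aconst k r)
      = Vk * (M : ℝ)⁻¹ + ((M : ℝ) * (M : ℝ)⁻¹ - (2 * (k : ℝ) - 1) * (M : ℝ)⁻¹)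
          * Aconst k r := by ring
  rw [expand, mul_inv_cancel₀ hM0]
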